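/- Let G be a split graph that arises from the disjoint union of a clique C and an independent set I by adding edges, each joining a vertex of C to a vertex of I. Then for every edge uu' of G with u, u' ∈ C, one has |n_G(u,u') − n_G(u',u)| = |d_G(u) − d_G(u')|. -/

import Mathlib

/-- `nG G u v` is the number of vertices of `G` whose distance to `u` is strictly
smaller than their distance to `v` (vertices at infinite distance to both `u` and `v`
are counted for neither, since the extended distance `⊤` is not `< ⊤`). -/
noncomputable def nG {V : Type*} [Fintype V] (G : SimpleGraph V) (u v : V) : ℕ :=
  Set.ncard {w : V | G.edist w u < G.edist w v}

/-- The Mostar index `Mo(G) = ∑_{uv ∈ E(G)} |nG(u,v) - nG(v,u)|` of a finite simple graph. -/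
noncomputable def mostar {V : Type*} [Fintype V] (G : SimpleGraph V) : ℤ :=
  ∑ e ∈ (Set.toFinite G.edgeSet).toFinset,
    Sym2.lift ⟨fun u v => |(nG G u v : ℤ) - (nG G v u : ℤ)|, fun _ _ => abs_sub_comm _ _⟩ e

lemma nG_eq_sdiff {V : Type*} [Fintype V] [DecidableEq V] (G : SimpleGraph V)
    [DecidableRel G.Adj] (C : Finset V)
    (hclique : ∀ u ∈ C, ∀ v ∈ C, u ≠ v → G.Adj u v)
    (hindep : ∀ u ∉ C, ∀ v ∉ C, ¬ G.Adj u v)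
    (u u' : V) (hu : u ∈ C) (hu' : u' ∈ C) (huu' : G.Adj u u') :
    nG G u u' = ((G.neighborFinset u) \ (G.neighborFinset u')).card := by
  have hne : u ≠ u' := huu'.ne
  have hset : {w : V | G.edist w u < G.edist w u'} =
      ↑(insert u (((G.neighborFinset u) \ (G.neighborFinset u')).erase u')) := by
    ext w
    simp only [Set.mem_setOf_eq, Finset.coe_insert, Set.mem_insert_iff, Finset.coe_erase,
      Set.mem_diff, Finset.mem_coe, Finset.mem_sdiff, SimpleGraph.mem_neighborFinset,
      Set.mem_singleton_iff]
    constructor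
    · intro hlt
      by_cases hwu : w = u
      · left; exact hwu
      by_cases hadj : G.Adj u w
      · right
        have h1 : G.edist w u = 1 := SimpleGraph.edist_eq_one_iff_adj.mpr hadj.symm
        refine ⟨⟨hadj, ?_⟩, ?_⟩
        · intro hadj'
          have : G.edist w u' = 1 := SimpleGraph.edist_eq_one_iff_adj.mpr hadj'.symm
          rw [h1, this] at hlt
          exact lt_irrefl _ hlt
        · intro hwu'
          subst hwu'
          rw [SimpleGraph.edist_self] at hlt
          exact (not_lt_of_ge zero_le) hlt
      -- w ≠ u, ¬ G.Adj u w : derive contradiction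
      · exfalso
        have hfin : G.edist w u ≠ ⊤ := by
          intro h
          rw [h] at hlt
          exact (not_lt_of_ge le_top) hlt
        have hreach : G.Reachable w u := SimpleGraph.edist_ne_top_iff_reachable.mp hfin
        obtain ⟨p⟩ := hreach
        have hnil : ¬ p.Nil := SimpleGraph.Walk.not_nil_of_ne hwu
        have hadjx : G.Adj w (p.getVert 1) := SimpleGraph.Walk.adj_snd hnil
        set x := p.getVert 1 with hx
        -- w ∉ C, since otherwise w adj u
        have hwC : w ∉ C := by
          intro hwC
          exact hadj (hclique u hu w hwC (Ne.symm hwu))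
        have hxC : x ∈ C := by
          by_contra hxC
          exact hindep w hwC x hxC hadjx
        -- edist w u' ≤ 2
        have h2 : G.edist w u' ≤ 2 := by
          by_cases hxu' : x = u'
          · have hadj' : G.Adj w u' := hxu' ▸ hadjx
            have : G.edist w u' = 1 := SimpleGraph.edist_eq_one_iff_adj.mpr hadj'
            rw [this]; exact one_le_two
          · have hxu'adj : G.Adj x u' := hclique x hxC u' hu' hxu'
            have hwalk : G.Walk w u' := SimpleGraph.Walk.cons hadjx
              (SimpleGraph.Walk.cons hxu'adj SimpleGraph.Walk.nil)
            calc G.edist w u' ≤ (SimpleGraph.Walk.cons hadjx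
                  (SimpleGraph.Walk.cons hxu'adj SimpleGraph.Walk.nil)).length :=
                SimpleGraph.Walk.edist_le _
              _ = 2 := by simp
        -- 2 ≤ edist w u
        have h0 : G.edist w u ≠ 0 := by
          simp only [ne_eq, SimpleGraph.edist_eq_zero_iff]; exact hwu
        have h1 : G.edist w u ≠ 1 := by
          simp only [ne_eq, SimpleGraph.edist_eq_one_iff_adj]
          intro h; exact hadj h.symm
        have hge1 : 1 ≤ G.edist w u := ENat.one_le_iff_ne_zero.mpr h0
        have hgt1 : 1 < G.edist w u := lt_of_le_of_ne hge1 (Ne.symm h1)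
        have hge2 : 2 ≤ G.edist w u := Order.add_one_le_of_lt hgt1
        exact absurd (lt_of_le_of_lt (le_trans h2 hge2) hlt) (lt_irrefl _)
    · rintro (rfl | ⟨⟨hadj, hnadj⟩, hwu'⟩)
      · rw [SimpleGraph.edist_self]
        exact SimpleGraph.edist_pos_of_ne hne
      · have h1 : G.edist w u = 1 := SimpleGraph.edist_eq_one_iff_adj.mpr hadj.symm
        rw [h1]
        have h0 : G.edist w u' ≠ 0 := by
          simp only [ne_eq, SimpleGraph.edist_eq_zero_iff]; exact hwu'
        have h1' : G.edist w u' ≠ 1 := by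
          simp only [ne_eq, SimpleGraph.edist_eq_one_iff_adj]
          intro h; exact hnadj h.symm
        exact lt_of_le_of_ne (ENat.one_le_iff_ne_zero.mpr h0) (Ne.symm h1')
  rw [nG, hset, Set.ncard_coe_finset]
  have hu'mem : u' ∈ (G.neighborFinset u) \ (G.neighborFinset u') := by
    simp [huu', G.irrefl]
  have humem : u ∉ ((G.neighborFinset u) \ (G.neighborFinset u')).erase u' := by
    simp [G.irrefl]
  rw [Finset.card_insert_of_notMem humem, Finset.card_erase_of_mem hu'mem]
  have : 1 ≤ ((G.neighborFinset u) \ (G.neighborFinset u')).card :=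
    Finset.card_pos.mpr ⟨u', hu'mem⟩
  omega

/-- In a split graph (clique `C`, independent set `Cᶜ`, cross edges only between them),
for every edge `uu'` with `u, u' ∈ C`: `|nG(u,u') - nG(u',u)| = |d(u) - d(u')|`. -/
theorem nG_clique_edge {V : Type*} [Fintype V] [DecidableEq V] (G : SimpleGraph V)
    [DecidableRel G.Adj] (C : Finset V)
    (hclique : ∀ u ∈ C, ∀ v ∈ C, u ≠ v → G.Adj u v)
    (hindep : ∀ u ∉ C, ∀ v ∉ C, ¬ G.Adj u v)
    (u u' : V) (hu : u ∈ C) (hu' : u' ∈ C) (huu' : G.Adj u u') :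
    |(nG G u u' : ℤ) - (nG G u' u : ℤ)| = |(G.degree u : ℤ) - (G.degree u' : ℤ)| := by
  rw [nG_eq_sdiff G C hclique hindep u u' hu hu' huu',
    nG_eq_sdiff G C hclique hindep u' u hu' hu huu'.symm]
  have h1 : ((G.neighborFinset u) \ (G.neighborFinset u')).card
      + ((G.neighborFinset u) ∩ (G.neighborFinset u')).card = G.degree u := by
    rw [Finset.card_sdiff_add_card_inter]; rfl
  have h2 : ((G.neighborFinset u') \ (G.neighborFinset u)).card
      + ((G.neighborFinset u') ∩ (G.neighborFinset u)).card = G.degree u' := by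
    rw [Finset.card_sdiff_add_card_inter]; rfl
  rw [Finset.inter_comm] at h2
  have : ((G.neighborFinset u \ G.neighborFinset u').card : ℤ)
      - ((G.neighborFinset u' \ G.neighborFinset u).card : ℤ)
      = (G.degree u : ℤ) - (G.degree u' : ℤ) := by omega
  rw [this]
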